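/- Let G be a simple graph with vertex set V and let S ⊆ V be a nonempty set such that S̄ induces no cycles in G. Then S is a structural set of L(G) and σ(L(G)) and σ(R_S(L(G))) differ at most by N(L(G);S); similarly, S is a structural set of 𝓛(G) and σ(𝓛(G)) and σ(R_S(𝓛(G))) differ at most by N(𝓛(G);S). -/

import Mathlib

open scoped Classical

noncomputable section

/-- A finite weighted digraph with weights in the field `𝕎 = RatFunc ℂ` of complex
rational functions: a finite vertex set together with a weight function, where
weight `0` encodes the absence of an edge (no parallel edges, loops allowed). -/
structure WDigraph (V : Type*) [Fintype V] [DecidableEq V] where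
  verts : Finset V
  w : V → V → RatFunc ℂ

namespace WDigraph

variable {V : Type*} [Fintype V] [DecidableEq V]

/-- Membership in `𝔾`: all edges (nonzero weights) join vertices of `G`. -/
def Wf (G : WDigraph V) : Prop :=
  ∀ u v, G.w u v ≠ 0 → u ∈ G.verts ∧ v ∈ G.verts

/-- `det (M(G) - λ I)` as an element of `𝕎`. -/
def charDet (G : WDigraph V) : RatFunc ℂ :=
  Matrix.det (Matrix.of fun i j : G.verts =>
    G.w i.1 j.1 - if i = j then (RatFunc.X : RatFunc ℂ) else 0)

/-- The spectrum of `G`: the list (multiset) of complex solutions, with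
multiplicity, of `det (M(G,λ) - λ I) = 0`. -/
def spec (G : WDigraph V) : Multiset ℂ := G.charDet.num.roots

/-- Membership in `𝔾_π`: every adjacency matrix entry `p/q` has `π(p/q) = deg p - deg q ≤ 0`. -/
def PiNonpos (G : WDigraph V) : Prop :=
  ∀ u v, (G.w u v).num.degree ≤ (G.w u v).denom.degree

end WDigraph

/-- Two spectra (lists) differ at most by the set `N`: after removing all entries
with values in `N` they agree. -/
def SpecDiffAtMost (s₁ s₂ : Multiset ℂ) (N : Set ℂ) : Prop :=
  s₁.filter (fun z => z ∉ N) = s₂.filter (fun z => z ∉ N)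

variable {V : Type*} [Fintype V] [DecidableEq V]

/-- `S` is a structural set of `G`: `S` is a nonempty subset of the vertices, the
complement of `S` induces no cycles in `ℓ(G)` (i.e. no closed walk through
consecutive-distinct vertices all lying outside `S`), and no loop at a vertex
outside `S` has weight `λ`. -/
def IsStructuralSet (G : WDigraph V) (S : Finset V) : Prop :=
  S.Nonempty ∧ S ⊆ G.verts ∧
    (∀ v, ¬ Relation.TransGen
      (fun a b => a ∈ G.verts ∧ b ∈ G.verts ∧ a ∉ S ∧ b ∉ S ∧ a ≠ b ∧ G.w a b ≠ 0) v v) ∧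
    ∀ v ∈ G.verts, v ∉ S → G.w v v ≠ RatFunc.X

/-- `β` is a branch of `G` from `u` to `v` with respect to `S`: a path or cycle
from `u` to `v` in `G` all of whose interior vertices lie outside `S`. -/
def IsBranch (G : WDigraph V) (S : Finset V) (u v : V) (β : List V) : Prop :=
  u ∈ S ∧ v ∈ S ∧
    ∃ int : List V, β = u :: (int ++ [v]) ∧
      (∀ x ∈ int, x ∈ G.verts ∧ x ∉ S) ∧
      (u :: int).Nodup ∧ v ∉ int ∧
      List.Chain' (fun a b => G.w a b ≠ 0) β

/-- The branch product `𝒫_ω(β)` of a branch `β = v₁, …, v_m`. -/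
def branchProd {V : Type*} (w : V → V → RatFunc ℂ) : List V → RatFunc ℂ
  | [] => 0
  | [_] => 0
  | [a, b] => w a b
  | a :: b :: c :: rest => w a b * branchProd w (b :: c :: rest) / (RatFunc.X - w b b)

/-- The isospectral reduction `R_S(G)`: the graph on vertex set `S` whose weight
from `u` to `v` is the sum of the branch products of all branches from `u` to
`v` with respect to `S`. -/
def WDigraph.reduce (G : WDigraph V) (S : Finset V) : WDigraph V where
  verts := S
  w := fun u v => ∑ᶠ β ∈ {β : List V | IsBranch G S u v β}, branchProd G.w β

/-- The set `N(G;S)`: all `z ∈ ℂ` such that for some vertex `v` of `G` off `S`,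
either `z = ω(e_vv)(z)` or `ω(e_vv)` is undefined at `z`. -/
def NSet (G : WDigraph V) (S : Finset V) : Set ℂ :=
  {z | ∃ v ∈ G.verts, v ∉ S ∧
    ((RatFunc.X - G.w v v).num.eval z = 0 ∨ (G.w v v).denom.eval z = 0)}

/-- Isomorphism of weighted digraphs: a vertex bijection carrying edges to edges
and preserving weights. -/
def WDigraph.Isom {V₁ : Type*} [Fintype V₁] [DecidableEq V₁]
    {V₂ : Type*} [Fintype V₂] [DecidableEq V₂]
    (G : WDigraph V₁) (H : WDigraph V₂) : Prop :=
  ∃ ρ : G.verts ≃ H.verts, ∀ u v : G.verts, H.w (ρ u).1 (ρ v).1 = G.w u.1 v.1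


/-- The weighted digraph `L(G)` in `𝔾` whose adjacency matrix is the combinatorial
Laplacian matrix `M_L(G)` of the simple graph `G`. -/
def lapDigraph (Γ : SimpleGraph V) [DecidableRel Γ.Adj] : WDigraph V where
  verts := Finset.univ
  w := fun i j =>
    if i = j then (Γ.degree i : RatFunc ℂ)
    else if Γ.Adj i j then -1 else 0

/-- The weighted digraph `𝓛(G)` in `𝔾` whose adjacency matrix is the normalized
Laplacian matrix `M_𝓛(G)` of the simple graph `G`. -/
def normLapDigraph (Γ : SimpleGraph V) [DecidableRel Γ.Adj] : WDigraph V where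
  verts := Finset.univ
  w := fun i j =>
    if i = j then (if Γ.degree i ≠ 0 then 1 else 0)
    else if Γ.Adj i j then
      RatFunc.C (-(1 / (Real.sqrt ((Γ.degree i : ℝ) * (Γ.degree j : ℝ)) : ℂ)))
    else 0


set_option linter.unusedSectionVars false
namespace LapAux
open Polynomial Matrix Finset List

variable {V : Type*} [Fintype V] [DecidableEq V]

/-- Partial branch product with endpoint `v`. -/
def hf (W : V → V → RatFunc ℂ) (v : V) : V → List V → RatFunc ℂ
  | a, [] => W a v
  | a, b :: l => (if a = b then 0 else W a b) / (RatFunc.X - W b b) * hf W v b l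

theorem hf_eq_branchProd (W : V → V → RatFunc ℂ) (v : V) :
    ∀ (l : List V) (a : V), List.Chain' (· ≠ ·) (a :: l) →
      hf W v a l = branchProd W (a :: l ++ [v])
  | [], a, _ => rfl
  | [b], a, h => by
      have hab : a ≠ b := (List.isChain_cons_cons.1 h).1
      simp only [hf, branchProd, if_neg hab, List.cons_append, List.singleton_append]
      rw [div_mul_eq_mul_div]
      rfl
  | b :: c :: l, a, h => by
      have hab : a ≠ b := (List.isChain_cons_cons.1 h).1
      have ih := hf_eq_branchProd W v (c :: l) b (List.isChain_cons_cons.1 h).2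
      simp only [hf, if_neg hab, List.cons_append] at ih ⊢
      rw [ih, div_mul_eq_mul_div]
      rfl

theorem hf_cons_ne {W : V → V → RatFunc ℂ} {v a b : V} {l : List V}
    (h : hf W v a (b :: l) ≠ 0) :
    (a ≠ b ∧ W a b ≠ 0) ∧ hf W v b l ≠ 0 := by
  have h1 : (if a = b then 0 else W a b) / (RatFunc.X - W b b) ≠ 0 ∧ hf W v b l ≠ 0 :=
    mul_ne_zero_iff.1 h
  have h2 := (div_ne_zero_iff.1 h1.1).1
  by_cases hab : a = b
  · simp [hab] at h2
  · exact ⟨⟨hab, by simpa [if_neg hab] using h2⟩, h1.2⟩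

theorem hf_ne_chainW (W : V → V → RatFunc ℂ) (v : V) :
    ∀ (l : List V) (a : V), hf W v a l ≠ 0 →
      List.Chain' (fun x y => W x y ≠ 0) (a :: l ++ [v])
  | [], a, h => List.isChain_pair.2 h
  | b :: l, a, h => by
      obtain ⟨⟨_, hW⟩, h2⟩ := hf_cons_ne h
      exact List.isChain_cons_cons.2 ⟨hW, hf_ne_chainW W v l b h2⟩

theorem hf_ne_chainNe (W : V → V → RatFunc ℂ) (v : V) :
    ∀ (l : List V) (a : V), hf W v a l ≠ 0 → List.Chain' (· ≠ ·) (a :: l)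
  | [], _, _ => List.isChain_singleton _
  | b :: l, a, h => by
      obtain ⟨⟨hne, _⟩, h2⟩ := hf_cons_ne h
      exact List.isChain_cons_cons.2 ⟨hne, hf_ne_chainNe W v l b h2⟩

/-- The strict relation used for acyclicity. -/
def rel (W : V → V → RatFunc ℂ) (S : Finset V) : V → V → Prop :=
  fun a b => a ∉ S ∧ b ∉ S ∧ a ≠ b ∧ W a b ≠ 0

theorem hf_ne_chainRel (W : V → V → RatFunc ℂ) (S : Finset V) (v : V) :
    ∀ (l : List V) (a : V), (∀ x ∈ l, x ∉ S) → hf W v a l ≠ 0 →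
      List.Chain' (rel W S) l
  | [], _, _, _ => List.isChain_nil
  | [_], _, _, _ => List.isChain_singleton _
  | b :: c :: l, a, hm, h => by
      obtain ⟨_, h2⟩ := hf_cons_ne h
      obtain ⟨⟨hbc, hWbc⟩, h3⟩ := hf_cons_ne h2
      refine List.isChain_cons_cons.2 ⟨⟨hm b (by simp), hm c (by simp), hbc, hWbc⟩, ?_⟩
      exact hf_ne_chainRel W S v (c :: l) b (fun x hx => hm x (List.mem_cons_of_mem _ hx)) h2

/-- Rank function from acyclicity. -/
def rk (r : V → V → Prop) : V → ℕ :=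
  fun a => (Finset.univ.filter (fun x => Relation.TransGen r x a)).card

theorem rk_lt {r : V → V → Prop} (hcyc : ∀ v, ¬ Relation.TransGen r v v)
    {a b : V} (h : r a b) : rk r a < rk r b := by
  apply Finset.card_lt_card
  rw [Finset.ssubset_iff_of_subset]
  · exact ⟨a, by simp [Relation.TransGen.single h], by simp [hcyc a]⟩
  · intro x hx
    simp only [Finset.mem_filter, Finset.mem_univ, true_and] at hx ⊢
    exact hx.tail h

theorem rk_lt_card {r : V → V → Prop} (hcyc : ∀ v, ¬ Relation.TransGen r v v)
    (a : V) : rk r a < Fintype.card V := by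
  have h1 : (Finset.univ.filter (fun x => Relation.TransGen r x a)) ⊆ Finset.univ.erase a := by
    intro x hx
    simp only [Finset.mem_filter, Finset.mem_univ, true_and] at hx
    refine Finset.mem_erase.2 ⟨?_, Finset.mem_univ x⟩
    rintro rfl; exact hcyc _ hx
  calc rk r a ≤ (Finset.univ.erase a).card := Finset.card_le_card h1
    _ < Finset.univ.card := Finset.card_erase_lt_of_mem (Finset.mem_univ a)
    _ = Fintype.card V := Finset.card_univ

theorem nodup_of_chain'_rel {r : V → V → Prop} (hcyc : ∀ v, ¬ Relation.TransGen r v v)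
    {l : List V} (h : List.Chain' r l) : l.Nodup := by
  have h2 : List.Chain' (fun x y => rk r x < rk r y) l := h.imp (fun _ _ hxy => rk_lt hcyc hxy)
  have : List.Pairwise (fun x y => rk r x < rk r y) l := by
    haveI : IsTrans V (fun x y => rk r x < rk r y) := ⟨fun _ _ _ => lt_trans⟩
    exact List.isChain_iff_pairwise.1 h2
  exact this.imp (fun hxy => by rintro rfl; exact lt_irrefl _ hxy)

end LapAux
namespace LapAux
open Polynomial Matrix Finset List

variable {V : Type*} [Fintype V] [DecidableEq V]

/-- Complement of `S` as a subtype. -/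
abbrev Tc (S : Finset V) := {x : V // x ∉ S}

variable (W : V → V → RatFunc ℂ) (S : Finset V)

def offM : Matrix (Tc S) (Tc S) (RatFunc ℂ) :=
  Matrix.of fun a b => if a = b then 0 else W a.1 b.1

def eM : Matrix (Tc S) (Tc S) (RatFunc ℂ) :=
  Matrix.diagonal fun a : Tc S => (RatFunc.X - W a.1 a.1)⁻¹

def nM : Matrix (Tc S) (Tc S) (RatFunc ℂ) := offM W S * eM W S

def dM : Matrix (Tc S) (Tc S) (RatFunc ℂ) :=
  Matrix.of fun a b => W a.1 b.1 - if a = b then RatFunc.X else 0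

def sG : Matrix (Tc S) (Tc S) (RatFunc ℂ) :=
  ∑ j ∈ Finset.range (Fintype.card V), (nM W S) ^ j

def invD : Matrix (Tc S) (Tc S) (RatFunc ℂ) := -(eM W S * sG W S)

theorem nM_apply (a b : Tc S) :
    nM W S a b = (if a = b then 0 else W a.1 b.1) * (RatFunc.X - W b.1 b.1)⁻¹ := by
  simp [nM, offM, eM, Matrix.mul_diagonal]

theorem npow_rank (hcyc : ∀ v, ¬ Relation.TransGen (rel W S) v v) :
    ∀ (j : ℕ) (a b : Tc S), ((nM W S) ^ j) a b ≠ 0 →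
      rk (rel W S) a.1 + j ≤ rk (rel W S) b.1
  | 0, a, b, h => by
      have : a = b := by
        by_contra hab
        exact h (by simp [Matrix.one_apply_ne hab])
      subst this; simp
  | (j+1), a, b, h => by
      rw [pow_succ', Matrix.mul_apply] at h
      obtain ⟨t, _, ht⟩ := Finset.exists_ne_zero_of_sum_ne_zero h
      have h1 : nM W S a t ≠ 0 := fun hz => ht (by rw [hz, zero_mul])
      have h2 : ((nM W S) ^ j) t b ≠ 0 := fun hz => ht (by rw [hz, mul_zero])
      have hat : a ≠ t := by
        rintro rfl; rw [nM_apply, if_pos rfl, zero_mul] at h1; exact h1 rfl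
      have hr : rel W S a.1 t.1 := by
        rw [nM_apply, if_neg hat] at h1
        refine ⟨a.2, t.2, fun he => hat (Subtype.ext he), fun hz => h1 ?_⟩
        rw [hz, zero_mul]
      have := npow_rank hcyc j t b h2
      have := rk_lt hcyc hr
      omega

theorem nM_pow_card (hcyc : ∀ v, ¬ Relation.TransGen (rel W S) v v) :
    (nM W S) ^ (Fintype.card V) = 0 := by
  ext a b
  by_contra h
  have h1 := npow_rank W S hcyc (Fintype.card V) a b (by simpa using h)
  have h2 := rk_lt_card hcyc b.1
  omega

theorem one_sub_nM_mul_sG (hcyc : ∀ v, ¬ Relation.TransGen (rel W S) v v) :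
    (1 - nM W S) * sG W S = 1 := by
  have h := mul_geom_sum (nM W S) (Fintype.card V)
  rw [nM_pow_card W S hcyc, zero_sub] at h
  rw [sG.eq_def, ← neg_sub (nM W S) 1, Matrix.neg_mul, h, neg_neg]

theorem sG_mul_one_sub_nM (hcyc : ∀ v, ¬ Relation.TransGen (rel W S) v v) :
    sG W S * (1 - nM W S) = 1 := by
  have h := geom_sum_mul (nM W S) (Fintype.card V)
  rw [nM_pow_card W S hcyc, zero_sub] at h
  rw [sG.eq_def, ← neg_sub (nM W S) 1, Matrix.mul_neg, h, neg_neg]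

theorem dM_eq (hW : ∀ a : V, RatFunc.X - W a a ≠ 0) :
    dM W S = (1 - nM W S) * Matrix.diagonal (fun a : Tc S => W a.1 a.1 - RatFunc.X) := by
  ext a b
  rw [Matrix.mul_diagonal]
  by_cases hab : a = b
  · subst hab
    simp [dM, Matrix.sub_apply, Matrix.one_apply, nM_apply, sub_mul]
  · have : (RatFunc.X - W b.1 b.1)⁻¹ * (W b.1 b.1 - RatFunc.X) = -1 := by
      rw [← neg_sub RatFunc.X (W b.1 b.1), mul_neg, inv_mul_cancel₀ (hW b.1)]
    simp only [dM, Matrix.sub_apply, Matrix.one_apply, if_neg hab, Matrix.of_apply,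
      nM_apply, if_neg hab]
    rw [zero_sub, neg_mul, mul_assoc, this]
    simp

theorem eM_mul_diag (hW : ∀ a : V, RatFunc.X - W a a ≠ 0) :
    (-(eM W S)) * Matrix.diagonal (fun a : Tc S => W a.1 a.1 - RatFunc.X) = 1 := by
  rw [eM, Matrix.neg_mul, Matrix.diagonal_mul_diagonal]
  have hval : ∀ a : Tc S, (RatFunc.X - W a.1 a.1)⁻¹ * (W a.1 a.1 - RatFunc.X) = -1 := by
    intro a
    rw [← neg_sub RatFunc.X (W a.1 a.1), mul_neg, inv_mul_cancel₀ (hW a.1)]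
  ext a b
  by_cases hab : a = b
  · subst hab; simp [Matrix.diagonal_apply_eq, hval a, Matrix.one_apply]
  · simp [Matrix.diagonal_apply_ne _ hab, Matrix.one_apply_ne hab]

theorem diag_mul_eM (hW : ∀ a : V, RatFunc.X - W a a ≠ 0) :
    Matrix.diagonal (fun a : Tc S => W a.1 a.1 - RatFunc.X) * (-(eM W S)) = 1 := by
  rw [eM, Matrix.mul_neg, Matrix.diagonal_mul_diagonal]
  have hval : ∀ a : Tc S, (W a.1 a.1 - RatFunc.X) * (RatFunc.X - W a.1 a.1)⁻¹ = -1 := by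
    intro a
    rw [← neg_sub RatFunc.X (W a.1 a.1), neg_mul, mul_inv_cancel₀ (hW a.1)]
  ext a b
  by_cases hab : a = b
  · subst hab; simp [Matrix.diagonal_apply_eq, hval a, Matrix.one_apply]
  · simp [Matrix.diagonal_apply_ne _ hab, Matrix.one_apply_ne hab]

theorem dM_mul_invD (hW : ∀ a : V, RatFunc.X - W a a ≠ 0) (hcyc : ∀ v, ¬ Relation.TransGen (rel W S) v v) :
    dM W S * invD W S = 1 := by
  have h1 : invD W S = (-(eM W S)) * sG W S := by rw [invD, Matrix.neg_mul]
  rw [h1, dM_eq W S hW]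
  calc (1 - nM W S) * Matrix.diagonal (fun a : Tc S => W a.1 a.1 - RatFunc.X) *
        ((-(eM W S)) * sG W S)
      = (1 - nM W S) * (Matrix.diagonal (fun a : Tc S => W a.1 a.1 - RatFunc.X) *
        (-(eM W S))) * sG W S := by rw [Matrix.mul_assoc, Matrix.mul_assoc, Matrix.mul_assoc]
    _ = (1 - nM W S) * sG W S := by rw [diag_mul_eM W S hW, Matrix.mul_one]
    _ = 1 := one_sub_nM_mul_sG W S hcyc

theorem invD_mul_dM (hW : ∀ a : V, RatFunc.X - W a a ≠ 0) (hcyc : ∀ v, ¬ Relation.TransGen (rel W S) v v) :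
    invD W S * dM W S = 1 := by
  have h1 : invD W S = (-(eM W S)) * sG W S := by rw [invD, Matrix.neg_mul]
  rw [h1, dM_eq W S hW]
  calc (-(eM W S)) * sG W S * ((1 - nM W S) *
        Matrix.diagonal (fun a : Tc S => W a.1 a.1 - RatFunc.X))
      = (-(eM W S)) * (sG W S * (1 - nM W S)) *
        Matrix.diagonal (fun a : Tc S => W a.1 a.1 - RatFunc.X) := by
        rw [Matrix.mul_assoc, Matrix.mul_assoc, Matrix.mul_assoc]
    _ = (-(eM W S)) * Matrix.diagonal (fun a : Tc S => W a.1 a.1 - RatFunc.X) := by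
        rw [sG_mul_one_sub_nM W S hcyc, Matrix.mul_one]
    _ = 1 := eM_mul_diag W S hW

theorem det_dM (hcyc : ∀ v, ¬ Relation.TransGen (rel W S) v v) :
    (dM W S).det = ∏ a : Tc S, (W a.1 a.1 - RatFunc.X) := by
  classical
  set r := rel W S
  have hcard : (0:ℕ) < Fintype.card V ∨ IsEmpty (Tc S) := by
    rcases isEmpty_or_nonempty (Tc S) with h | h
    · exact Or.inr h
    · exact Or.inl (Fintype.card_pos_iff.2 ⟨h.some.1⟩)
  let idx : Tc S → ℕ := fun a => (Fintype.equivFin (Tc S) a).1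
  have hidx : ∀ a, idx a < Fintype.card (Tc S) := fun a => (Fintype.equivFin (Tc S) a).2
  have hcardle : Fintype.card (Tc S) ≤ Fintype.card V := Fintype.card_subtype_le _
  let φ : Tc S → ℕ := fun a => Fintype.card V * rk r a.1 + idx a
  have hφmono : ∀ {a b : Tc S}, rk r a.1 < rk r b.1 → φ a < φ b := by
    intro a b h
    have := hidx a
    have h2 : Fintype.card V * rk r a.1 + idx a < Fintype.card V * (rk r a.1 + 1) := by
      have : idx a < Fintype.card V := lt_of_lt_of_le (hidx a) hcardle
      nlinarith
    have h3 : Fintype.card V * (rk r a.1 + 1) ≤ Fintype.card V * rk r b.1 :=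
      Nat.mul_le_mul_left _ h
    calc φ a < Fintype.card V * (rk r a.1 + 1) := h2
      _ ≤ Fintype.card V * rk r b.1 := h3
      _ ≤ φ b := Nat.le_add_right _ _
  have hφinj : Function.Injective φ := by
    intro a b hab
    have hia := lt_of_lt_of_le (hidx a) hcardle
    have hib := lt_of_lt_of_le (hidx b) hcardle
    have hrk : rk r a.1 = rk r b.1 := by
      by_contra h
      rcases Nat.lt_or_ge (rk r a.1) (rk r b.1) with h1 | h1
      · exact absurd hab (Nat.ne_of_lt (hφmono h1))
      · have h2 : rk r b.1 < rk r a.1 := lt_of_le_of_ne h1 (fun he => h he.symm)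
        exact absurd hab.symm (Nat.ne_of_lt (hφmono h2))
    have : idx a = idx b := by simp only [φ, hrk] at hab; omega
    have : (Fintype.equivFin (Tc S)) a = (Fintype.equivFin (Tc S)) b := Fin.ext this
    exact (Fintype.equivFin (Tc S)).injective this
  letI : LinearOrder (Tc S) := LinearOrder.lift' φ hφinj
  have htri : (dM W S).BlockTriangular id := by
    intro a b hab
    by_contra h
    have hne : a ≠ b := by rintro rfl; exact lt_irrefl _ hab
    have hWab : W a.1 b.1 ≠ 0 := by
      simpa [dM, if_neg hne] using h
    have hr : r a.1 b.1 := ⟨a.2, b.2, fun he => hne (Subtype.ext he), hWab⟩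
    have : φ a < φ b := hφmono (rk_lt hcyc hr)
    have hba : φ b < φ a := hab
    omega
  have := Matrix.det_of_upperTriangular htri
  rw [this]
  apply Finset.prod_congr rfl
  intro a _
  simp [dM]

end LapAux
namespace LapAux
open Polynomial Matrix Finset List

variable {V : Type*} [Fintype V] [DecidableEq V]
variable (W : V → V → RatFunc ℂ) (S : Finset V)

theorem mulVec_apply' {α : Type*} [Fintype α] (M : Matrix α α (RatFunc ℂ)) (w : α → RatFunc ℂ)
    (a : α) : (M *ᵥ w) a = ∑ t, M a t * w t := rfl

theorem cons_sum (v : V) (j : ℕ) (a : V) :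
    (∑ t : Tc S, (if a = t.1 then 0 else W a t.1) / (RatFunc.X - W t.1 t.1) *
        ∑ fn : Fin j → Tc S, hf W v t.1 (List.ofFn fun i => (fn i).1)) =
      ∑ fn : Fin (j + 1) → Tc S, hf W v a (List.ofFn fun i => (fn i).1) := by
  rw [← Equiv.sum_comp (Fin.consEquiv (fun _ : Fin (j+1) => Tc S))
      (fun fn => hf W v a (List.ofFn fun i => (fn i).1))]
  rw [Fintype.sum_prod_type]
  apply Finset.sum_congr rfl
  intro t _
  rw [Finset.mul_sum]
  apply Finset.sum_congr rfl
  intro fn _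
  have hl : (List.ofFn fun i => ((Fin.consEquiv (fun _ : Fin (j+1) => Tc S)) (t, fn) i).1) =
      t.1 :: List.ofFn (fun i => (fn i).1) := by
    rw [List.ofFn_succ]
    simp [Fin.consEquiv]
  rw [hl, hf]

theorem mulVec_pow (v : V) : ∀ (j : ℕ) (a : Tc S),
    ((nM W S) ^ j *ᵥ fun b : Tc S => W b.1 v) a =
      ∑ fn : Fin j → Tc S, hf W v a.1 (List.ofFn fun i => (fn i).1) := by
  intro j
  induction j with
  | zero =>
      intro a
      simp only [pow_zero, Matrix.one_mulVec]
      rw [Fintype.sum_unique]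
      simp [hf, List.ofFn_zero]
  | succ j ih =>
      intro a
      rw [pow_succ', ← Matrix.mulVec_mulVec, mulVec_apply']
      simp_rw [ih]
      rw [← cons_sum W S v j a.1]
      apply Finset.sum_congr rfl
      intro t _
      rw [nM_apply, div_eq_mul_inv]
      rcases eq_or_ne a t with rfl | hat
      · simp
      · have : a.1 ≠ t.1 := fun he => hat (Subtype.ext he)
        rw [if_neg hat, if_neg this]

/-- The index finset for interior vertex sequences. -/
def sigF : Finset ((j : ℕ) × (Fin j → Tc S)) :=
  (Finset.range (Fintype.card V + 1)).sigma (fun j => (Finset.univ : Finset (Fin j → Tc S)))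

theorem schur_entry (v u : V) (hu : u ∈ S) :
    W u v + (∑ a : Tc S, W u a.1 * ((RatFunc.X - W a.1 a.1)⁻¹ *
        (∑ j ∈ Finset.range (Fintype.card V),
          ((nM W S) ^ j *ᵥ fun b : Tc S => W b.1 v) a))) =
      ∑ p ∈ sigF S, hf W v u (List.ofFn fun i => (p.2 i).1) := by
  rw [sigF, Finset.sum_sigma, Finset.sum_range_succ']
  have h0 : (∑ fn ∈ (Finset.univ : Finset (Fin 0 → Tc S)),
      hf W v u (List.ofFn fun i => (fn i).1)) = W u v := by
    rw [Fintype.sum_unique]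
    simp [hf, List.ofFn_zero]
  rw [h0, add_comm (W u v)]
  congr 1
  calc ∑ a : Tc S, W u a.1 * ((RatFunc.X - W a.1 a.1)⁻¹ *
        (∑ j ∈ Finset.range (Fintype.card V),
          ((nM W S) ^ j *ᵥ fun b : Tc S => W b.1 v) a))
      = ∑ a : Tc S, ∑ j ∈ Finset.range (Fintype.card V),
          W u a.1 * ((RatFunc.X - W a.1 a.1)⁻¹ *
            ((nM W S) ^ j *ᵥ fun b : Tc S => W b.1 v) a) := by
        apply Finset.sum_congr rfl; intro a _
        rw [Finset.mul_sum, Finset.mul_sum]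
    _ = ∑ j ∈ Finset.range (Fintype.card V), ∑ a : Tc S,
          W u a.1 * ((RatFunc.X - W a.1 a.1)⁻¹ *
            ((nM W S) ^ j *ᵥ fun b : Tc S => W b.1 v) a) := Finset.sum_comm
    _ = ∑ j ∈ Finset.range (Fintype.card V),
          ∑ fn ∈ (Finset.univ : Finset (Fin (j+1) → Tc S)),
            hf W v u (List.ofFn fun i => (fn i).1) := by
        apply Finset.sum_congr rfl
        intro j _
        rw [← cons_sum W S v j u]
        apply Finset.sum_congr rfl
        intro t _
        rw [mulVec_pow]
        have hut : u ≠ t.1 := fun he => t.2 (he ▸ hu)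
        rw [if_neg hut, div_eq_mul_inv, mul_assoc]

/-- Convert an index to a candidate branch. -/
def toL (u v : V) (p : (j : ℕ) × (Fin j → Tc S)) : List V :=
  u :: (List.ofFn fun i => (p.2 i).1) ++ [v]

theorem finsum_branch (G : WDigraph V) (hGv : G.verts = Finset.univ)
    (hcyc : ∀ x, ¬ Relation.TransGen (rel G.w S) x x)
    (u v : V) (hu : u ∈ S) (hv : v ∈ S) :
    (∑ᶠ β ∈ {β : List V | IsBranch G S u v β}, branchProd G.w β) =
      ∑ p ∈ sigF S, hf G.w v u (List.ofFn fun i => (p.2 i).1) := by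
  classical
  have hzero : ∀ p ∈ sigF S, hf G.w v u (List.ofFn fun i => (p.2 i).1) ≠ 0 →
      IsBranch G S u v (toL S u v p) := by
    rintro ⟨j, fn⟩ _ hne
    have hmem : ∀ x ∈ (List.ofFn fun i => ((fn i : Tc S)).1), x ∉ S := by
      intro x hx
      rw [List.mem_ofFn] at hx
      obtain ⟨i, rfl⟩ := hx
      exact (fn i).2
    have hchW := hf_ne_chainW G.w v (List.ofFn fun i => (fn i).1) u hne
    have hchRel := hf_ne_chainRel G.w S v (List.ofFn fun i => (fn i).1) u hmem hne
    have hnd := nodup_of_chain'_rel hcyc hchRel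
    have hul : u ∉ (List.ofFn fun i => ((fn i : Tc S)).1) := fun hx => (hmem u hx) hu
    have hvl : v ∉ (List.ofFn fun i => ((fn i : Tc S)).1) := fun hx => (hmem v hx) hv
    exact ⟨hu, hv, List.ofFn fun i => (fn i).1, rfl,
      fun x hx => ⟨hGv ▸ Finset.mem_univ x, hmem x hx⟩,
      List.nodup_cons.2 ⟨hul, hnd⟩, hvl, hchW⟩
  have hsetF : {β : List V | IsBranch G S u v β} =
      ↑(((sigF S).filter (fun p => IsBranch G S u v (toL S u v p))).image (toL S u v)) := by
    ext β
    simp only [Set.mem_setOf_eq, Finset.coe_image, Set.mem_image, Finset.mem_coe,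
      Finset.mem_filter]
    constructor
    · intro hβ
      obtain ⟨-, -, int, hint, hintm, hnd, -, -⟩ := id hβ
      have hndint : int.Nodup := (List.nodup_cons.1 hnd).2
      refine ⟨⟨int.length, fun i => ⟨int.get i, (hintm _ (List.get_mem int i)).2⟩⟩, ⟨?_, ?_⟩, ?_⟩
      · rw [sigF, Finset.mem_sigma]
        refine ⟨Finset.mem_range.2 ?_, Finset.mem_univ _⟩
        exact Nat.lt_succ_of_le (hndint.length_le_card)
      · have : toL S u v ⟨int.length, fun i => ⟨int.get i, (hintm _ (List.get_mem int i)).2⟩⟩ = β := by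
          rw [toL, hint]
          simp [List.ofFn_get]
        rw [this]; exact hβ
      · rw [toL, hint]
        simp [List.ofFn_get]
    · rintro ⟨p, ⟨-, hp⟩, rfl⟩; exact hp
  have hinj : ∀ x ∈ (sigF S).filter (fun p => IsBranch G S u v (toL S u v p)),
      ∀ y ∈ (sigF S).filter (fun p => IsBranch G S u v (toL S u v p)),
      toL S u v x = toL S u v y → x = y := by
    rintro ⟨j, f⟩ - ⟨j', f'⟩ - he
    rw [toL, toL] at he
    have h1 : (List.ofFn fun i => ((f i : Tc S)).1) = (List.ofFn fun i => ((f' i : Tc S)).1) :=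
      List.append_left_injective [v] (List.cons_injective he)
    have hj : j = j' := by
      have := congrArg List.length h1
      simpa using this
    subst hj
    have hff : f = f' := by
      have h2 := List.ofFn_injective h1
      funext i
      exact Subtype.ext (congrFun h2 i)
    rw [hff]
  have hterm : ∀ p ∈ (sigF S).filter (fun p => IsBranch G S u v (toL S u v p)),
      branchProd G.w (toL S u v p) = hf G.w v u (List.ofFn fun i => (p.2 i).1) := by
    rintro ⟨j, fn⟩ hp
    have hb := (Finset.mem_filter.1 hp).2
    obtain ⟨-, -, int, hint, -, hnd, -, -⟩ := hb
    have h1 : (List.ofFn fun i => ((fn i : Tc S)).1) = int :=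
      List.append_left_injective [v] (List.cons_injective hint)
    have hnd2 : (u :: List.ofFn fun i => ((fn i : Tc S)).1).Nodup := by
      rw [h1]; exact hnd
    have hch : List.Chain' (· ≠ ·) (u :: List.ofFn fun i => ((fn i : Tc S)).1) :=
      List.Pairwise.isChain hnd2
    exact (hf_eq_branchProd G.w v _ u hch).symm
  rw [hsetF, finsum_mem_coe_finset, Finset.sum_image hinj, Finset.sum_congr rfl hterm]
  exact Finset.sum_filter_of_ne hzero

end LapAux
namespace LapAux
open Polynomial Matrix Finset List

variable {V : Type*} [Fintype V] [DecidableEq V]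

theorem charDet_factor (G : WDigraph V) (hGv : G.verts = Finset.univ)
    (hW : ∀ a : V, RatFunc.X - G.w a a ≠ 0) (S : Finset V)
    (hcyc : ∀ x, ¬ Relation.TransGen (rel G.w S) x x) :
    G.charDet = (∏ a : Tc S, (G.w a.1 a.1 - RatFunc.X)) * (G.reduce S).charDet := by
  classical
  set W := G.w with hWdef
  letI instInv : Invertible (dM W S) :=
    ⟨invD W S, invD_mul_dM W S hW hcyc, dM_mul_invD W S hW hcyc⟩
  have hmem : ∀ x : V, x ∈ G.verts := fun x => by rw [hGv]; exact Finset.mem_univ x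
  let ε : ({x : V // x ∈ S} ⊕ Tc S) ≃ {x : V // x ∈ G.verts} :=
    (Equiv.sumCompl (· ∈ S)).trans (Equiv.subtypeUnivEquiv hmem).symm
  let M0 : Matrix {x : V // x ∈ G.verts} {x : V // x ∈ G.verts} (RatFunc ℂ) :=
    Matrix.of fun i j => W i.1 j.1 - if i = j then RatFunc.X else 0
  let A : Matrix {x : V // x ∈ S} {x : V // x ∈ S} (RatFunc ℂ) :=
    Matrix.of fun i j => W i.1 j.1 - if i = j then RatFunc.X else 0
  let B : Matrix {x : V // x ∈ S} (Tc S) (RatFunc ℂ) :=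
    Matrix.of fun i j => W i.1 j.1
  let C : Matrix (Tc S) {x : V // x ∈ S} (RatFunc ℂ) :=
    Matrix.of fun i j => W i.1 j.1
  have hsub : M0.submatrix ε ε = Matrix.fromBlocks A B C (dM W S) := by
    ext i j
    rcases i with i | i <;> rcases j with j | j
    · show W i.1 j.1 - (if ε (Sum.inl i) = ε (Sum.inl j) then RatFunc.X else 0) =
        W i.1 j.1 - (if i = j then RatFunc.X else 0)
      simp [Equiv.apply_eq_iff_eq]
    · show W i.1 j.1 - (if ε (Sum.inl i) = ε (Sum.inr j) then RatFunc.X else 0) = W i.1 j.1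
      simp [Equiv.apply_eq_iff_eq]
    · show W i.1 j.1 - (if ε (Sum.inr i) = ε (Sum.inl j) then RatFunc.X else 0) = W i.1 j.1
      simp [Equiv.apply_eq_iff_eq]
    · show W i.1 j.1 - (if ε (Sum.inr i) = ε (Sum.inr j) then RatFunc.X else 0) =
        W i.1 j.1 - (if i = j then RatFunc.X else 0)
      simp [Equiv.apply_eq_iff_eq]
  have heM : eM W S = Matrix.diagonal (fun a : Tc S => (RatFunc.X - W a.1 a.1)⁻¹) := rfl
  have hsG : sG W S = ∑ k ∈ Finset.range (Fintype.card V), (nM W S) ^ k := rfl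
  have hschur : A - B * ⅟(dM W S) * C =
      Matrix.of fun i j : {x : V // x ∈ S} =>
        (G.reduce S).w i.1 j.1 - if i = j then RatFunc.X else 0 := by
    ext i j
    have hBiC : (B * (eM W S * sG W S) * C) i j =
        ∑ a : Tc S, W i.1 a.1 * ((RatFunc.X - W a.1 a.1)⁻¹ *
          (∑ k ∈ Finset.range (Fintype.card V),
            ((nM W S) ^ k *ᵥ fun b : Tc S => W b.1 j.1) a)) := by
      rw [Matrix.mul_assoc B _ C, Matrix.mul_assoc (eM W S) (sG W S) C, Matrix.mul_apply]
      apply Finset.sum_congr rfl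
      intro a _
      have h1 : (eM W S * (sG W S * C)) a j =
          (RatFunc.X - W a.1 a.1)⁻¹ * (sG W S * C) a j := by
        rw [heM, Matrix.diagonal_mul]
      rw [h1]
      have h2 : (sG W S * C) a j =
          ∑ k ∈ Finset.range (Fintype.card V),
            ((nM W S) ^ k *ᵥ fun b : Tc S => W b.1 j.1) a := by
        rw [hsG, Matrix.sum_mul, Matrix.sum_apply]
        exact Finset.sum_congr rfl fun k _ => rfl
      rw [h2]
      rfl
    have hred : (G.reduce S).w i.1 j.1 = W i.1 j.1 + (B * (eM W S * sG W S) * C) i j := by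
      show (∑ᶠ β ∈ {β : List V | IsBranch G S i.1 j.1 β}, branchProd W β) = _
      rw [finsum_branch S G hGv hcyc i.1 j.1 i.2 j.2, ← schur_entry W S j.1 i.1 i.2, hBiC]
    have h3 : B * ⅟(dM W S) * C = -(B * (eM W S * sG W S) * C) := by
      show B * invD W S * C = _
      rw [invD, Matrix.mul_neg, Matrix.neg_mul]
    show (A - B * ⅟(dM W S) * C) i j =
      (G.reduce S).w i.1 j.1 - if i = j then RatFunc.X else 0
    rw [Matrix.sub_apply, h3, Matrix.neg_apply, hred]
    show (W i.1 j.1 - if i = j then RatFunc.X else 0) - -((B * (eM W S * sG W S) * C) i j) = _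
    ring
  have hdet : G.charDet = M0.det := rfl
  rw [hdet, ← Matrix.det_submatrix_equiv_self ε M0, hsub, Matrix.det_fromBlocks₂₂,
    det_dM W S hcyc, hschur]
  rfl

end LapAux
namespace LapAux
open Polynomial Matrix Finset List

variable {V : Type*} [Fintype V] [DecidableEq V]

theorem algebraMap_X_sub_C_ne (z : ℂ) : (RatFunc.X : RatFunc ℂ) - RatFunc.C z ≠ 0 := by
  intro h
  have h1 : algebraMap ℂ[X] (RatFunc ℂ) (Polynomial.X - Polynomial.C z) = 0 := by
    rw [map_sub, RatFunc.algebraMap_X, RatFunc.algebraMap_C, h]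
  have h2 := (map_ne_zero_iff _ (RatFunc.algebraMap_injective ℂ)).2
      (Polynomial.X_sub_C_ne_zero z)
  exact h2 h1


theorem main (G : WDigraph V) (hGv : G.verts = Finset.univ) (c : V → V → ℂ)
    (hc : ∀ u v, G.w u v = RatFunc.C (c u v))
    (S : Finset V) (hne : S.Nonempty)
    (hcyc : ∀ x, ¬ Relation.TransGen (rel G.w S) x x) :
    IsStructuralSet G S ∧ SpecDiffAtMost G.spec ((G.reduce S).spec) (NSet G S) := by
  classical
  have hW : ∀ a : V, RatFunc.X - G.w a a ≠ 0 := fun a => by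
    rw [hc]; exact algebraMap_X_sub_C_ne _
  have haMinj : Function.Injective (algebraMap ℂ[X] (RatFunc ℂ)) :=
    RatFunc.algebraMap_injective ℂ
  constructor
  · refine ⟨hne, by rw [hGv]; exact Finset.subset_univ S, ?_, ?_⟩
    · intro v hv
      exact hcyc v (Relation.TransGen.mono
        (fun a b h => ⟨h.2.2.1, h.2.2.2.1, h.2.2.2.2.1, h.2.2.2.2.2⟩) v v hv)
    · intro v _ _ h
      rw [hc] at h
      exact algebraMap_X_sub_C_ne (c v v) (by rw [← h]; ring)
  -- Spectral part
  set Mp : Matrix {x : V // x ∈ G.verts} {x : V // x ∈ G.verts} ℂ[X] :=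
    Matrix.of fun i j => Polynomial.C (c i.1 j.1) - if i = j then Polynomial.X else 0 with hMp
  set gp : ℂ[X] := Mp.det with hgp
  have hg : G.charDet = algebraMap ℂ[X] (RatFunc ℂ) gp := by
    rw [hgp, RingHom.map_det]
    show Matrix.det _ = Matrix.det _
    congr 1
    refine Matrix.ext fun i j => ?_
    show G.w i.1 j.1 - (if i = j then RatFunc.X else 0) =
      algebraMap ℂ[X] (RatFunc ℂ) (Polynomial.C (c i.1 j.1) - if i = j then Polynomial.X else 0)
    rw [map_sub, RatFunc.algebraMap_C, apply_ite (algebraMap ℂ[X] (RatFunc ℂ)),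
      RatFunc.algebraMap_X, map_zero, hc]
  have hgp0 : gp ≠ 0 := by
    have hMeq : Mp = -(Matrix.charmatrix (Matrix.of fun i j :
        {x : V // x ∈ G.verts} => c i.1 j.1)) := by
      refine Matrix.ext fun i j => ?_
      rw [Matrix.neg_apply, Matrix.charmatrix_apply, neg_sub]
      show Polynomial.C (c i.1 j.1) - (if i = j then Polynomial.X else 0) = _
      rw [Matrix.diagonal_apply]
      rfl
    rw [hgp, hMeq, Matrix.det_neg]
    apply mul_ne_zero
    · exact pow_ne_zero _ (neg_ne_zero.2 one_ne_zero)
    · exact (Matrix.charpoly_monic _).ne_zero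
  set Pp : ℂ[X] := ∏ a : Tc S, (Polynomial.C (c a.1 a.1) - Polynomial.X) with hPp
  have hPp0 : Pp ≠ 0 := by
    rw [hPp, Finset.prod_ne_zero_iff]
    intro a _
    intro h
    exact Polynomial.X_sub_C_ne_zero (c a.1 a.1) (by rw [← neg_sub] at h; exact neg_eq_zero.1 h)
  have hPmap : (∏ a : Tc S, (G.w a.1 a.1 - RatFunc.X)) = algebraMap ℂ[X] (RatFunc ℂ) Pp := by
    rw [hPp, map_prod]
    apply Finset.prod_congr rfl
    intro a _
    rw [map_sub, RatFunc.algebraMap_C, RatFunc.algebraMap_X, hc]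
  set f : RatFunc ℂ := (G.reduce S).charDet with hf
  have hfac : algebraMap ℂ[X] (RatFunc ℂ) gp = algebraMap ℂ[X] (RatFunc ℂ) Pp * f := by
    rw [← hg, ← hPmap]
    exact charDet_factor G hGv hW S hcyc
  have hPne : algebraMap ℂ[X] (RatFunc ℂ) Pp ≠ 0 := (map_ne_zero_iff _ haMinj).2 hPp0
  have hf0 : f ≠ 0 := by
    intro h
    rw [h, mul_zero] at hfac
    exact ((map_ne_zero_iff _ haMinj).2 hgp0) hfac
  have hfdiv : f = algebraMap ℂ[X] (RatFunc ℂ) gp / algebraMap ℂ[X] (RatFunc ℂ) Pp := by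
    rw [hfac, mul_comm (algebraMap ℂ[X] (RatFunc ℂ) Pp) f, mul_div_assoc,
      div_self hPne, mul_one]
  have hdvd : f.denom ∣ Pp := by
    rw [hfdiv]; exact RatFunc.denom_div_dvd gp Pp
  have hden : algebraMap ℂ[X] (RatFunc ℂ) f.denom ≠ 0 :=
    (map_ne_zero_iff _ haMinj).2 (RatFunc.denom_ne_zero f)
  have hnum : algebraMap ℂ[X] (RatFunc ℂ) f.num = f * algebraMap ℂ[X] (RatFunc ℂ) f.denom :=
    (div_eq_iff hden).1 (RatFunc.num_div_denom f)
  have hcross : f.num * Pp = gp * f.denom := by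
    apply haMinj
    rw [_root_.map_mul, _root_.map_mul, hnum, hfac]
    ring
  have hroots : f.num.roots + Pp.roots = gp.roots + f.denom.roots := by
    rw [← Polynomial.roots_mul (mul_ne_zero (RatFunc.num_ne_zero hf0) hPp0),
      ← Polynomial.roots_mul (mul_ne_zero hgp0 (RatFunc.denom_ne_zero f)), hcross]
  have hNP : ∀ z ∈ Pp.roots, z ∈ NSet G S := by
    intro z hz
    have hz2 : Pp.eval z = 0 := (Polynomial.mem_roots hPp0).1 hz
    rw [hPp, Polynomial.eval_prod] at hz2
    obtain ⟨a, -, ha⟩ := Finset.prod_eq_zero_iff.1 hz2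
    rw [Polynomial.eval_sub, Polynomial.eval_C, Polynomial.eval_X] at ha
    refine ⟨a.1, by rw [hGv]; exact Finset.mem_univ _, a.2, Or.inl ?_⟩
    have hXC : RatFunc.X - G.w a.1 a.1 =
        algebraMap ℂ[X] (RatFunc ℂ) (Polynomial.X - Polynomial.C (c a.1 a.1)) := by
      rw [map_sub, RatFunc.algebraMap_X, RatFunc.algebraMap_C, hc]
    rw [hXC, RatFunc.num_algebraMap]
    rw [Polynomial.eval_sub, Polynomial.eval_X, Polynomial.eval_C]
    linear_combination -ha
  have hNd : ∀ z ∈ f.denom.roots, z ∈ NSet G S := by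
    intro z hz
    have hz2 : f.denom.eval z = 0 := (Polynomial.mem_roots (RatFunc.denom_ne_zero f)).1 hz
    have h3 : Pp.eval z = 0 := Polynomial.eval_eq_zero_of_dvd_of_eval_eq_zero hdvd hz2
    exact hNP z ((Polynomial.mem_roots hPp0).2 h3)
  show SpecDiffAtMost _ _ _
  rw [SpecDiffAtMost]
  have hspec1 : G.spec = gp.roots := by
    rw [WDigraph.spec, hg, RatFunc.num_algebraMap]
  have hspec2 : (G.reduce S).spec = f.num.roots := rfl
  rw [hspec1, hspec2]
  have hfilter := congrArg (Multiset.filter (fun z => z ∉ NSet G S)) hroots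
  rw [Multiset.filter_add, Multiset.filter_add] at hfilter
  have e1 : Multiset.filter (fun z => z ∉ NSet G S) Pp.roots = 0 :=
    Multiset.filter_eq_nil.2 (fun a ha h => h (hNP a ha))
  have e2 : Multiset.filter (fun z => z ∉ NSet G S) f.denom.roots = 0 :=
    Multiset.filter_eq_nil.2 (fun a ha h => h (hNd a ha))
  rw [e1, e2, add_zero, add_zero] at hfilter
  exact hfilter.symm

end LapAux

/-- **Theorem 2.** Let `G` be a simple graph and `S` a nonempty vertex set whose
complement induces no cycles in `G`. Then `S ∈ st(L(G))` and `σ(L(G))`,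
`σ(R_S(L(G)))` differ at most by `N(L(G);S)`; similarly `S ∈ st(𝓛(G))` and
`σ(𝓛(G))`, `σ(R_S(𝓛(G)))` differ at most by `N(𝓛(G);S)`. -/
theorem laplacian_reduction (Γ : SimpleGraph V) [DecidableRel Γ.Adj]
    (S : Finset V) (hne : S.Nonempty)
    (hcyc : ∀ v, ¬ Relation.TransGen (fun a b => a ∉ S ∧ b ∉ S ∧ Γ.Adj a b) v v) :
    (IsStructuralSet (lapDigraph Γ) S ∧
      SpecDiffAtMost (lapDigraph Γ).spec ((lapDigraph Γ).reduce S).spec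
        (NSet (lapDigraph Γ) S)) ∧
    (IsStructuralSet (normLapDigraph Γ) S ∧
      SpecDiffAtMost (normLapDigraph Γ).spec ((normLapDigraph Γ).reduce S).spec
        (NSet (normLapDigraph Γ) S)) := by
  constructor
  · refine LapAux.main (lapDigraph Γ) rfl
      (fun i j => if i = j then ((Γ.degree i : ℂ)) else if Γ.Adj i j then -1 else 0)
      (fun u v => ?_) S hne (fun x hx => hcyc x (Relation.TransGen.mono
        (fun a b h => ⟨h.1, h.2.1, ?_⟩) x x hx))
    · show (if u = v then ((Γ.degree u : RatFunc ℂ)) else if Γ.Adj u v then -1 else 0) =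
        RatFunc.C (if u = v then ((Γ.degree u : ℂ)) else if Γ.Adj u v then -1 else 0)
      split_ifs with h1 h2
      · exact (map_natCast (RatFunc.C) _).symm
      · rw [map_neg, map_one]
      · rw [map_zero]
    · by_contra hadj
      refine h.2.2.2 ?_
      show (if a = b then ((Γ.degree a : RatFunc ℂ)) else if Γ.Adj a b then -1 else 0) = 0
      rw [if_neg h.2.2.1, if_neg hadj]
  · refine LapAux.main (normLapDigraph Γ) rfl
      (fun i j => if i = j then (if Γ.degree i ≠ 0 then 1 else 0)
        else if Γ.Adj i j then
          -(1 / (Real.sqrt ((Γ.degree i : ℝ) * (Γ.degree j : ℝ)) : ℂ)) else 0)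
      (fun u v => ?_) S hne (fun x hx => hcyc x (Relation.TransGen.mono
        (fun a b h => ⟨h.1, h.2.1, ?_⟩) x x hx))
    · show (if u = v then (if Γ.degree u ≠ 0 then 1 else 0)
        else if Γ.Adj u v then
          RatFunc.C (-(1 / (Real.sqrt ((Γ.degree u : ℝ) * (Γ.degree v : ℝ)) : ℂ))) else 0) =
        RatFunc.C (if u = v then (if Γ.degree u ≠ 0 then 1 else 0)
        else if Γ.Adj u v then
          -(1 / (Real.sqrt ((Γ.degree u : ℝ) * (Γ.degree v : ℝ)) : ℂ)) else 0)
      split_ifs with h1 h2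
      · exact (map_one RatFunc.C).symm
      · exact (map_zero RatFunc.C).symm
      · rfl
      · exact (map_zero RatFunc.C).symm
    · by_contra hadj
      refine h.2.2.2 ?_
      show (if a = b then (if Γ.degree a ≠ 0 then 1 else 0)
        else if Γ.Adj a b then
          RatFunc.C (-(1 / (Real.sqrt ((Γ.degree a : ℝ) * (Γ.degree b : ℝ)) : ℂ))) else 0) = 0
      rw [if_neg h.2.2.1, if_neg hadj]
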